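/- The characteristic polynomial of K equals the characteristic polynomial of I − K; consequently, λ is an eigenvalue of K with a given algebraic multiplicity if and only if 1 − λ is an eigenvalue of K with the same algebraic multiplicity, and the spectrum of K is contained in the interval [0, 1]. -/

import Mathlib

open Finset

/-- Off-diagonal entries of the adjacent-transposition chain: `Koff n p x y = p_{ji}/(n-1)`
if `y` is obtained from `x` by swapping the entries in (0-based) positions `r-1` and `r`
for some `1 ≤ r ≤ n-1`, and `0` otherwise. Here `x r` is the entry in position `r`. -/
noncomputable def Koff (n : ℕ) (p : Fin n → Fin n → ℝ)
    (x y : Equiv.Perm (Fin n)) : ℝ :=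
  ∑ r : Fin n,
    if 1 ≤ (r : ℕ) ∧
        y = x * Equiv.swap (⟨(r : ℕ) - 1, Nat.lt_of_le_of_lt (Nat.sub_le _ _) r.isLt⟩ : Fin n) r
    then p (x r) (x ⟨(r : ℕ) - 1, Nat.lt_of_le_of_lt (Nat.sub_le _ _) r.isLt⟩) / ((n : ℝ) - 1)
    else 0

/-- The transition matrix `K` of the adjacent-transposition chain on permutations. -/
noncomputable def Kmat (n : ℕ) (p : Fin n → Fin n → ℝ) :
    Matrix (Equiv.Perm (Fin n)) (Equiv.Perm (Fin n)) ℝ :=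
  Matrix.of fun x y =>
    if x = y then 1 - ∑ z ∈ Finset.univ.erase x, Koff n p x z
    else Koff n p x y

/-- Unnormalized stationary weight `∏_{r<s} p_{x_r,x_s}`. -/
noncomputable def piUn (n : ℕ) (p : Fin n → Fin n → ℝ) (x : Equiv.Perm (Fin n)) : ℝ :=
  ∏ rs ∈ Finset.univ.filter (fun rs : Fin n × Fin n => rs.1 < rs.2), p (x rs.1) (x rs.2)

/-- The stationary distribution `π`. -/
noncomputable def piDist (n : ℕ) (p : Fin n → Fin n → ℝ) (x : Equiv.Perm (Fin n)) : ℝ :=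
  (∑ y : Equiv.Perm (Fin n), piUn n p y)⁻¹ * piUn n p x

namespace KP

open Polynomial Matrix Equiv

variable {n : ℕ}

def pr (r : Fin n) : Fin n := ⟨(r : ℕ) - 1, Nat.lt_of_le_of_lt (Nat.sub_le _ _) r.isLt⟩

lemma Koff_eq (p : Fin n → Fin n → ℝ) (x y : Equiv.Perm (Fin n)) :
    Koff n p x y = ∑ r : Fin n,
      if 1 ≤ (r : ℕ) ∧ y = x * Equiv.swap (pr r) r
      then p (x r) (x (pr r)) / ((n : ℝ) - 1) else 0 := rfl

lemma pr_val (r : Fin n) : (pr r : ℕ) = (r : ℕ) - 1 := rfl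

lemma pr_ne {r : Fin n} (hr : 1 ≤ (r : ℕ)) : pr r ≠ r := by
  simp only [Ne, Fin.ext_iff, pr_val]; omega

lemma neg_val {r : Fin n} (hr : 1 ≤ (r : ℕ)) : ((-r : Fin n) : ℕ) = n - (r : ℕ) := by
  rw [Fin.coe_neg]
  exact Nat.mod_eq_of_lt (by have := r.isLt; omega)

lemma one_le_neg {r : Fin n} (hr : 1 ≤ (r : ℕ)) : 1 ≤ ((-r : Fin n) : ℕ) := by
  rw [neg_val hr]; have := r.isLt; omega

lemma rev_neg {r : Fin n} (hr : 1 ≤ (r : ℕ)) : Fin.rev (-r) = pr r := by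
  have := r.isLt
  simp only [Fin.ext_iff, Fin.val_rev, pr_val, neg_val hr]; omega

lemma rev_pr_neg {r : Fin n} (hr : 1 ≤ (r : ℕ)) : Fin.rev (pr (-r)) = r := by
  have := r.isLt
  simp only [Fin.ext_iff, Fin.val_rev, pr_val, neg_val hr]; omega

lemma neg_eq_zero_of {r : Fin n} (hr : ¬ 1 ≤ (r : ℕ)) : ¬ 1 ≤ ((-r : Fin n) : ℕ) := by
  haveI : NeZero n := ⟨Nat.ne_zero_of_lt r.isLt⟩
  have hr0 : r = 0 := by
    ext; simp only [Fin.val_zero]; omega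
  subst hr0
  rw [neg_zero]
  simp

lemma revPerm_mul_self : (Fin.revPerm : Equiv.Perm (Fin n)) * Fin.revPerm = 1 := by
  ext a
  simp [Equiv.Perm.mul_apply, Fin.rev_rev]

lemma hkey {r : Fin n} (hr : 1 ≤ (r : ℕ)) :
    Equiv.swap (pr r) r * Fin.revPerm =
      Fin.revPerm * Equiv.swap (pr (-r)) (-r) := by
  have h1 : (Fin.revPerm : Equiv.Perm (Fin n)) * Equiv.swap (pr (-r)) (-r) * Fin.revPerm⁻¹
      = Equiv.swap (pr r) r := by
    rw [← Equiv.swap_apply_apply]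
    have e1 : (Fin.revPerm : Equiv.Perm (Fin n)) (pr (-r)) = r := rev_pr_neg hr
    have e2 : (Fin.revPerm : Equiv.Perm (Fin n)) (-r) = pr r := rev_neg hr
    rw [e1, e2, Equiv.swap_comm]
  rw [← h1, inv_mul_cancel_right]

lemma dir {r : Fin n} (hr : 1 ≤ (r : ℕ)) (x y : Equiv.Perm (Fin n))
    (h : y = x * Equiv.swap (pr r) r) :
    x * Fin.revPerm = y * Fin.revPerm * Equiv.swap (pr (-r)) (-r) := by
  rw [h, mul_assoc x _ Fin.revPerm, hkey hr, ← mul_assoc, mul_assoc _ _ (Equiv.swap (pr (-r)) (-r)),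
    Equiv.swap_mul_self, mul_one]

lemma dir' {r : Fin n} (hr : 1 ≤ (r : ℕ)) (x y : Equiv.Perm (Fin n))
    (h : x * Fin.revPerm = y * Fin.revPerm * Equiv.swap (pr (-r)) (-r)) :
    y = x * Equiv.swap (pr r) r := by
  have h2 := dir (one_le_neg hr) (y * Fin.revPerm) (x * Fin.revPerm) h
  rw [neg_neg] at h2
  simpa [mul_assoc, revPerm_mul_self] using h2


lemma rev_eq_pr_neg {r : Fin n} (hr : 1 ≤ (r : ℕ)) : Fin.rev r = pr (-r) := by
  have := rev_neg (one_le_neg hr); rwa [neg_neg] at this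

lemma rev_pr {r : Fin n} (hr : 1 ≤ (r : ℕ)) : Fin.rev (pr r) = -r := by
  have := rev_pr_neg (one_le_neg hr); rwa [neg_neg] at this

lemma koff_symm (p : Fin n → Fin n → ℝ) (x y : Equiv.Perm (Fin n)) :
    Koff n p x y = Koff n p (y * Fin.revPerm) (x * Fin.revPerm) := by
  rw [Koff_eq, Koff_eq]
  apply Fintype.sum_equiv (Equiv.neg (Fin n))
  intro r
  simp only [Equiv.neg_apply]
  by_cases hr : 1 ≤ (r : ℕ)
  · by_cases hc : y = x * Equiv.swap (pr r) r
    · rw [if_pos ⟨hr, hc⟩, if_pos ⟨one_le_neg hr, dir hr x y hc⟩]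
      have e1 : (y * Fin.revPerm : Equiv.Perm (Fin n)) (-r) = x r := by
        rw [Equiv.Perm.mul_apply]
        have h3 : (Fin.revPerm : Equiv.Perm (Fin n)) (-r) = pr r := rev_neg hr
        rw [h3, hc, Equiv.Perm.mul_apply, Equiv.swap_apply_left]
      have e2 : (y * Fin.revPerm : Equiv.Perm (Fin n)) (pr (-r)) = x (pr r) := by
        rw [Equiv.Perm.mul_apply]
        have h3 : (Fin.revPerm : Equiv.Perm (Fin n)) (pr (-r)) = r := rev_pr_neg hr
        rw [h3, hc, Equiv.Perm.mul_apply, Equiv.swap_apply_right]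
      rw [e1, e2]
    · rw [if_neg (fun hh => hc hh.2), if_neg (fun hh => hc (dir' hr x y hh.2))]
  · rw [if_neg (fun hh => hr hh.1), if_neg (fun hh => neg_eq_zero_of hr hh.1)]
lemma rowsum (p : Fin n → Fin n → ℝ) (x : Equiv.Perm (Fin n)) :
    ∑ z ∈ Finset.univ.erase x, Koff n p x z =
      ∑ r : Fin n, (if 1 ≤ (r : ℕ) then p (x r) (x (pr r)) / ((n : ℝ) - 1) else 0) := by
  simp only [Koff_eq]
  rw [Finset.sum_comm]
  apply Finset.sum_congr rfl
  intro r _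
  by_cases hr : 1 ≤ (r : ℕ)
  · simp only [hr, true_and, if_true]
    rw [Finset.sum_ite_eq' (Finset.univ.erase x) (x * Equiv.swap (pr r) r)
      (fun _ => p (x r) (x (pr r)) / ((n : ℝ) - 1))]
    rw [if_pos]
    refine Finset.mem_erase.mpr ⟨?_, Finset.mem_univ _⟩
    intro hcon
    have h1 : x * Equiv.swap (pr r) r = x * 1 := by rw [mul_one]; exact hcon
    exact pr_ne hr (Equiv.swap_eq_one_iff.mp (mul_left_cancel h1))
  · simp [hr]

lemma sum_ite_one (hn : 2 ≤ n) :
    ∑ r : Fin n, (if 1 ≤ (r : ℕ) then (1 : ℝ) / ((n : ℝ) - 1) else 0) = 1 := by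
  haveI : NeZero n := ⟨by omega⟩
  rw [← Finset.sum_filter]
  rw [Finset.sum_const]
  have hfil : (Finset.univ.filter fun r : Fin n => 1 ≤ (r : ℕ)) = Finset.univ.erase 0 := by
    ext r
    simp only [Finset.mem_filter, Finset.mem_univ, true_and, Finset.mem_erase, and_true]
    constructor
    · intro h h0; subst h0; simp at h
    · intro h
      have : (r : ℕ) ≠ 0 := fun hc => h (by ext; simpa using hc)
      omega
  rw [hfil, Finset.card_erase_of_mem (Finset.mem_univ _), Finset.card_univ, Fintype.card_fin]
  have hne : (n : ℝ) - 1 ≠ 0 := by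
    have : (2 : ℝ) ≤ (n : ℝ) := by exact_mod_cast hn
    linarith
  rw [nsmul_eq_mul]
  push_cast [Nat.cast_sub (by omega : 1 ≤ n)]
  field_simp

lemma pairsum (hn : 2 ≤ n) (p : Fin n → Fin n → ℝ)
    (hps : ∀ i j : Fin n, i ≠ j → p i j + p j i = 1) (x y : Equiv.Perm (Fin n))
    (hy : y = x * Fin.revPerm) :
    (∑ r : Fin n, (if 1 ≤ (r : ℕ) then p (x r) (x (pr r)) / ((n : ℝ) - 1) else 0)) +
    (∑ r : Fin n, (if 1 ≤ (r : ℕ) then p (y r) (y (pr r)) / ((n : ℝ) - 1) else 0))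
      = 1 := by
  have hyapp : ∀ a, y a = x (Fin.rev a) := by
    intro a; rw [hy]; rfl
  have h2 : (∑ r : Fin n, (if 1 ≤ (r : ℕ) then p (y r) (y (pr r)) / ((n : ℝ) - 1) else 0)) =
      ∑ r : Fin n, (if 1 ≤ (r : ℕ) then p (x (pr r)) (x r) / ((n : ℝ) - 1) else 0) := by
    apply Fintype.sum_equiv (Equiv.neg (Fin n))
    intro r
    simp only [Equiv.neg_apply]
    by_cases hr : 1 ≤ (r : ℕ)
    · rw [if_pos hr, if_pos (one_le_neg hr), hyapp, hyapp,
        rev_eq_pr_neg hr, rev_pr hr]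
    · rw [if_neg hr, if_neg (neg_eq_zero_of hr)]
  rw [h2, ← Finset.sum_add_distrib]
  have h3 : (∑ r : Fin n,
      ((if 1 ≤ (r : ℕ) then p (x r) (x (pr r)) / ((n : ℝ) - 1) else 0) +
       (if 1 ≤ (r : ℕ) then p (x (pr r)) (x r) / ((n : ℝ) - 1) else 0))) =
      ∑ r : Fin n, (if 1 ≤ (r : ℕ) then (1 : ℝ) / ((n : ℝ) - 1) else 0) := by
    apply Finset.sum_congr rfl
    intro r _
    by_cases hr : 1 ≤ (r : ℕ)
    · rw [if_pos hr, if_pos hr, if_pos hr, ← add_div]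
      congr 1
      exact hps (x r) (x (pr r)) (fun hc => pr_ne hr (x.injective hc).symm)
    · simp [hr]
  rw [h3, sum_ite_one hn]

lemma charpoly_conj {m R : Type*} [Fintype m] [DecidableEq m] [CommRing R]
    (P Q A : Matrix m m R) (h1 : P * Q = 1) :
    (P * A * Q).charpoly = A.charpoly := by
  let f : Matrix m m R →+* Matrix m m R[X] := (Polynomial.C : R →+* R[X]).mapMatrix
  have h1' : f P * f Q = 1 := by rw [← _root_.map_mul f, h1, _root_.map_one f]
  have key : Matrix.charmatrix (P * A * Q) = f P * Matrix.charmatrix A * f Q := by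
    unfold Matrix.charmatrix
    rw [mul_sub, sub_mul]
    congr 1
    · have hc := (Matrix.scalar_commute (X : R[X]) (fun r' => Commute.all _ r') (f P)).eq
      rw [← hc, mul_assoc, h1', mul_one]
    · show f (P * A * Q) = f P * f A * f Q
      rw [_root_.map_mul f, _root_.map_mul f]
  rw [Matrix.charpoly, key, Matrix.det_mul, Matrix.det_mul, Matrix.charpoly]
  have h2 : (f P).det * (f Q).det = 1 := by rw [← Matrix.det_mul, h1', Matrix.det_one]
  rw [mul_right_comm, h2, one_mul]

lemma charpoly_transpose {m R : Type*} [Fintype m] [DecidableEq m] [CommRing R]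
    (A : Matrix m m R) : Aᵀ.charpoly = A.charpoly := by
  unfold Matrix.charpoly
  rw [← Matrix.det_transpose (Matrix.charmatrix A)]
  congr 1
  ext i j
  by_cases h : i = j
  · subst h
    rw [Matrix.transpose_apply, Matrix.charmatrix_apply_eq, Matrix.charmatrix_apply_eq,
      Matrix.transpose_apply]
  · rw [Matrix.transpose_apply, Matrix.charmatrix_apply_ne _ _ _ h,
      Matrix.charmatrix_apply_ne _ _ _ (Ne.symm h), Matrix.transpose_apply]

lemma eval_charpoly {m R : Type*} [Fintype m] [DecidableEq m] [CommRing R]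
    (A : Matrix m m R) (t : R) :
    A.charpoly.eval t = (t • (1 : Matrix m m R) - A).det := by
  rw [Matrix.charpoly, Polynomial.eval, ← Polynomial.coe_eval₂RingHom, RingHom.map_det]
  congr 1
  ext i j
  by_cases h : i = j
  · subst h
    simp [Matrix.charmatrix_apply_eq, Matrix.one_apply]
  · simp [Matrix.charmatrix_apply_ne _ _ _ h, Matrix.one_apply, h]

lemma swap_lt {r a b : Fin n} (hr : 1 ≤ (r : ℕ)) (hab : a < b) (hne : ¬(a = pr r ∧ b = r)) :
    Equiv.swap (pr r) r a < Equiv.swap (pr r) r b := by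
  have ha := a.isLt; have hb := b.isLt; have hrl := r.isLt
  rw [Fin.lt_def] at hab ⊢
  rw [Equiv.swap_apply_def, Equiv.swap_apply_def]
  split_ifs <;> (simp only [Fin.ext_iff, pr_val, not_and] at * <;> omega)

lemma swap_mem_erase {r : Fin n} (hr : 1 ≤ (r : ℕ)) (a : Fin n × Fin n)
    (ha : a ∈ ((Finset.univ.filter (fun rs : Fin n × Fin n => rs.1 < rs.2)).erase (pr r, r))) :
    (Equiv.swap (pr r) r a.1, Equiv.swap (pr r) r a.2) ∈
      ((Finset.univ.filter (fun rs : Fin n × Fin n => rs.1 < rs.2)).erase (pr r, r)) := by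
  rw [Finset.mem_erase, Finset.mem_filter] at ha ⊢
  obtain ⟨hne, -, hlt⟩ := ha
  refine ⟨?_, Finset.mem_univ _, ?_⟩
  · intro hc
    rw [Prod.ext_iff] at hc
    obtain ⟨hc1, hc2⟩ := hc
    have h4 : a.1 = r := by
      have := congrArg (Equiv.swap (pr r) r) hc1
      rwa [Equiv.swap_apply_self, Equiv.swap_apply_left] at this
    have h5 : a.2 = pr r := by
      have := congrArg (Equiv.swap (pr r) r) hc2
      rwa [Equiv.swap_apply_self, Equiv.swap_apply_right] at this
    rw [h4, h5, Fin.lt_def, pr_val] at hlt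
    omega
  · exact swap_lt hr hlt (fun hc => hne (Prod.ext hc.1 hc.2))

lemma piUn_balance (p : Fin n → Fin n → ℝ) {r : Fin n} (hr : 1 ≤ (r : ℕ))
    (x : Equiv.Perm (Fin n)) :
    piUn n p x * p (x r) (x (pr r)) =
      piUn n p (x * Equiv.swap (pr r) r) *
        p ((x * Equiv.swap (pr r) r : Equiv.Perm (Fin n)) r)
          ((x * Equiv.swap (pr r) r : Equiv.Perm (Fin n)) (pr r)) := by
  have h2 : (x * Equiv.swap (pr r) r : Equiv.Perm (Fin n)) r = x (pr r) := by
    rw [Equiv.Perm.mul_apply, Equiv.swap_apply_right]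
  have h3 : (x * Equiv.swap (pr r) r : Equiv.Perm (Fin n)) (pr r) = x r := by
    rw [Equiv.Perm.mul_apply, Equiv.swap_apply_left]
  have hs₀ : ((pr r, r) : Fin n × Fin n) ∈
      Finset.univ.filter (fun rs : Fin n × Fin n => rs.1 < rs.2) := by
    simp only [Finset.mem_filter, Finset.mem_univ, true_and]
    rw [Fin.lt_def, pr_val]; omega
  unfold piUn
  rw [← Finset.mul_prod_erase _ _ hs₀, ← Finset.mul_prod_erase _ _ hs₀]
  have hprod : (∏ rs ∈ ((Finset.univ.filter (fun rs : Fin n × Fin n => rs.1 < rs.2)).erase (pr r, r)),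
        p ((x * Equiv.swap (pr r) r : Equiv.Perm (Fin n)) rs.1)
          ((x * Equiv.swap (pr r) r : Equiv.Perm (Fin n)) rs.2)) =
      ∏ rs ∈ ((Finset.univ.filter (fun rs : Fin n × Fin n => rs.1 < rs.2)).erase (pr r, r)),
        p (x rs.1) (x rs.2) := by
    apply Finset.prod_nbij' (fun rs => (Equiv.swap (pr r) r rs.1, Equiv.swap (pr r) r rs.2))
      (fun rs => (Equiv.swap (pr r) r rs.1, Equiv.swap (pr r) r rs.2))
      (swap_mem_erase hr) (swap_mem_erase hr)
    · intro a _
      exact Prod.ext (Equiv.swap_apply_self _ _ _) (Equiv.swap_apply_self _ _ _)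
    · intro a _
      exact Prod.ext (Equiv.swap_apply_self _ _ _) (Equiv.swap_apply_self _ _ _)
    · intro a _
      rfl
  rw [hprod, h2, h3]
  ring

lemma Kmat_eq (p : Fin n → Fin n → ℝ) (x y : Equiv.Perm (Fin n)) :
    Kmat n p x y = if x = y then 1 - ∑ z ∈ Finset.univ.erase x, Koff n p x z
      else Koff n p x y := rfl

noncomputable def sgn (x : Equiv.Perm (Fin n)) : ℝ := ((Equiv.Perm.sign x : ℤ) : ℝ)

lemma sgn_mul_self (x : Equiv.Perm (Fin n)) : sgn x * sgn x = 1 := by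
  have h : (Equiv.Perm.sign x) * (Equiv.Perm.sign x) = 1 := Int.units_mul_self _
  unfold sgn
  rw [← Int.cast_mul, ← Units.val_mul, h, Units.val_one, Int.cast_one]

lemma sgn_swap_rel {r : Fin n} (hr : 1 ≤ (r : ℕ)) (x y : Equiv.Perm (Fin n))
    (hy : y = x * Equiv.swap (pr r) r) : sgn y = -sgn x := by
  unfold sgn
  rw [hy, Equiv.Perm.sign_mul, Equiv.Perm.sign_swap (pr_ne hr)]
  push_cast
  ring

lemma koff_nonneg (hn : 2 ≤ n) (p : Fin n → Fin n → ℝ)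
    (hp : ∀ i j : Fin n, i ≠ j → p i j ∈ Set.Ioo (0 : ℝ) 1) (x y : Equiv.Perm (Fin n)) :
    0 ≤ Koff n p x y := by
  rw [Koff_eq]
  apply Finset.sum_nonneg
  intro r _
  by_cases h : 1 ≤ (r : ℕ) ∧ y = x * Equiv.swap (pr r) r
  · rw [if_pos h]
    have hne : x r ≠ x (pr r) := fun hc => pr_ne h.1 (x.injective hc).symm
    have := (hp _ _ hne).1
    have h2 : (0 : ℝ) ≤ (n : ℝ) - 1 := by
      have : (2 : ℝ) ≤ (n : ℝ) := by exact_mod_cast hn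
      linarith
    positivity
  · rw [if_neg h]

lemma rowsum_le (hn : 2 ≤ n) (p : Fin n → Fin n → ℝ)
    (hp : ∀ i j : Fin n, i ≠ j → p i j ∈ Set.Ioo (0 : ℝ) 1) (x : Equiv.Perm (Fin n)) :
    ∑ z ∈ Finset.univ.erase x, Koff n p x z ≤ 1 := by
  rw [rowsum]
  calc (∑ r : Fin n, (if 1 ≤ (r : ℕ) then p (x r) (x (pr r)) / ((n : ℝ) - 1) else 0))
      ≤ ∑ r : Fin n, (if 1 ≤ (r : ℕ) then (1 : ℝ) / ((n : ℝ) - 1) else 0) := by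
        apply Finset.sum_le_sum
        intro r _
        by_cases hr : 1 ≤ (r : ℕ)
        · rw [if_pos hr, if_pos hr]
          have hne : x r ≠ x (pr r) := fun hc => pr_ne hr (x.injective hc).symm
          have h1 := (hp _ _ hne).2
          have h2 : (0 : ℝ) < (n : ℝ) - 1 := by
            have : (2 : ℝ) ≤ (n : ℝ) := by exact_mod_cast hn
            linarith
          gcongr
        · simp [hr]
    _ = 1 := sum_ite_one hn

theorem charpoly_one_sub (hn : 2 ≤ n) (p : Fin n → Fin n → ℝ)
    (hps : ∀ i j : Fin n, i ≠ j → p i j + p j i = 1) :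
    (Kmat n p).charpoly = ((1 : Matrix (Equiv.Perm (Fin n)) (Equiv.Perm (Fin n)) ℝ) - Kmat n p).charpoly := by
  classical
  let e : Equiv.Perm (Fin n) ≃ Equiv.Perm (Fin n) := Equiv.mulRight Fin.revPerm
  have hDD : (Matrix.diagonal (sgn (n := n))) * (Matrix.diagonal (sgn (n := n))) = 1 := by
    rw [Matrix.diagonal_mul_diagonal]
    have h : (fun i => sgn (n := n) i * sgn i) = fun _ => 1 := funext sgn_mul_self
    rw [h, Matrix.diagonal_one]
  have hmain : (1 : Matrix (Equiv.Perm (Fin n)) (Equiv.Perm (Fin n)) ℝ) - Kmat n p =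
      Matrix.diagonal sgn * ((Kmat n p)ᵀ.submatrix e e) * Matrix.diagonal sgn := by
    ext x y
    rw [Matrix.sub_apply, Matrix.one_apply, Matrix.mul_diagonal, Matrix.diagonal_mul,
      Matrix.submatrix_apply, Matrix.transpose_apply]
    have hex : ∀ z : Equiv.Perm (Fin n), e z = z * Fin.revPerm := fun z => rfl
    rw [hex, hex]
    by_cases hxy : x = y
    · subst hxy
      rw [if_pos rfl, Kmat_eq, Kmat_eq, if_pos rfl, if_pos rfl]
      have h1 : (∑ z ∈ Finset.univ.erase x, Koff n p x z) +
          (∑ z ∈ Finset.univ.erase (x * Fin.revPerm), Koff n p (x * Fin.revPerm) z) = 1 := by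
        rw [rowsum, rowsum]
        exact pairsum hn p hps x (x * Fin.revPerm) rfl
      have h2 := sgn_mul_self x
      set SA := ∑ z ∈ Finset.univ.erase x, Koff n p x z
      set SB := ∑ z ∈ Finset.univ.erase (x * Fin.revPerm), Koff n p (x * Fin.revPerm) z
      linear_combination (SB - 1) * h2 + h1
    · rw [if_neg hxy, Kmat_eq, Kmat_eq, if_neg hxy, if_neg (show ¬(y * Fin.revPerm = x * Fin.revPerm) from
        fun hc => hxy (mul_right_cancel hc).symm)]
      rw [← koff_symm]
      by_cases hex2 : ∃ r : Fin n, 1 ≤ (r : ℕ) ∧ y = x * Equiv.swap (pr r) r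
      · obtain ⟨r, hrr, hy⟩ := hex2
        rw [sgn_swap_rel hrr x y hy]
        linear_combination (Koff n p x y) * sgn_mul_self x
      · have h0 : Koff n p x y = 0 := by
          rw [Koff_eq]
          apply Finset.sum_eq_zero
          intro r _
          rw [if_neg]
          exact fun hh => hex2 ⟨r, hh⟩
        rw [h0]
        ring
  rw [hmain, charpoly_conj _ _ _ hDD]
  have hre : (Kmat n p)ᵀ.submatrix ⇑e ⇑e = Matrix.reindex e.symm e.symm (Kmat n p)ᵀ := by
    simp [Matrix.reindex_apply]
  rw [hre, Matrix.charpoly_reindex, charpoly_transpose]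

lemma kmat_nonneg (hn : 2 ≤ n) (p : Fin n → Fin n → ℝ)
    (hp : ∀ i j : Fin n, i ≠ j → p i j ∈ Set.Ioo (0 : ℝ) 1) (x y : Equiv.Perm (Fin n)) :
    0 ≤ Kmat n p x y := by
  rw [Kmat_eq]
  by_cases hxy : x = y
  · rw [if_pos hxy]
    have := rowsum_le hn p hp x
    linarith
  · rw [if_neg hxy]
    exact koff_nonneg hn p hp x y

lemma kmat_rowsum (p : Fin n → Fin n → ℝ) (x : Equiv.Perm (Fin n)) :
    ∑ y : Equiv.Perm (Fin n), Kmat n p x y = 1 := by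
  rw [← Finset.add_sum_erase _ _ (Finset.mem_univ x)]
  have h1 : Kmat n p x x = 1 - ∑ z ∈ Finset.univ.erase x, Koff n p x z := by
    rw [Kmat_eq, if_pos rfl]
  have h2 : ∑ y ∈ Finset.univ.erase x, Kmat n p x y
      = ∑ y ∈ Finset.univ.erase x, Koff n p x y := by
    apply Finset.sum_congr rfl
    intro y hy
    rw [Kmat_eq, if_neg (fun hc => (Finset.mem_erase.mp hy).1 hc.symm)]
  rw [h1, h2]
  ring

lemma piUn_pos (p : Fin n → Fin n → ℝ)
    (hp : ∀ i j : Fin n, i ≠ j → p i j ∈ Set.Ioo (0 : ℝ) 1) (x : Equiv.Perm (Fin n)) :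
    0 < piUn n p x := by
  apply Finset.prod_pos
  intro rs hrs
  have hlt := (Finset.mem_filter.mp hrs).2
  exact (hp _ _ (x.injective.ne (ne_of_lt hlt))).1

lemma detailed_balance (p : Fin n → Fin n → ℝ) (x y : Equiv.Perm (Fin n)) :
    piUn n p x * Kmat n p x y = piUn n p y * Kmat n p y x := by
  by_cases hxy : x = y
  · rw [hxy]
  · rw [Kmat_eq, Kmat_eq, if_neg hxy, if_neg (fun hc => hxy hc.symm)]
    rw [Koff_eq, Koff_eq, Finset.mul_sum, Finset.mul_sum]
    apply Finset.sum_congr rfl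
    intro r _
    by_cases hr : 1 ≤ (r : ℕ)
    · by_cases hc : y = x * Equiv.swap (pr r) r
      · have hc' : x = y * Equiv.swap (pr r) r := by
          rw [hc, mul_assoc, Equiv.swap_mul_self, mul_one]
        rw [if_pos ⟨hr, hc⟩, if_pos ⟨hr, hc'⟩]
        have hb := piUn_balance p hr x
        rw [← hc] at hb
        rw [div_eq_mul_inv, div_eq_mul_inv, ← mul_assoc, ← mul_assoc, hb]
      · have hc' : ¬ x = y * Equiv.swap (pr r) r := fun hcc => hc (by
          rw [hcc, mul_assoc, Equiv.swap_mul_self, mul_one])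
        rw [if_neg (fun hh => hc hh.2), if_neg (fun hh => hc' hh.2), mul_zero, mul_zero]
    · rw [if_neg (fun hh => hr hh.1), if_neg (fun hh => hr hh.1), mul_zero, mul_zero]

lemma exists_eigenvector {m : Type*} [Fintype m] [DecidableEq m]
    (A : Matrix m m ℂ) {μ : ℂ} (h : A.charpoly.IsRoot μ) :
    ∃ v : m → ℂ, v ≠ 0 ∧ A.mulVec v = μ • v := by
  have hdet : (μ • (1 : Matrix m m ℂ) - A).det = 0 := by
    rw [← eval_charpoly]; exact h
  obtain ⟨v, hv0, hv⟩ := Matrix.exists_mulVec_eq_zero_iff.mpr hdet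
  refine ⟨v, hv0, ?_⟩
  rw [Matrix.sub_mulVec, Matrix.smul_mulVec, Matrix.one_mulVec, sub_eq_zero] at hv
  exact hv.symm

open scoped ComplexOrder in
lemma herm_root_real {m : Type*} [Fintype m] [DecidableEq m] (A : Matrix m m ℂ)
    (hA : Aᴴ = A) {μ : ℂ} (h : A.charpoly.IsRoot μ) : μ.im = 0 := by
  obtain ⟨v, hv0, hv⟩ := exists_eigenvector A h
  have hts : star (dotProduct (star v) v) = dotProduct (star v) v :=
    (Matrix.star_dotProduct v v).symm
  have ht0 : dotProduct (star v) v ≠ 0 :=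
    fun hc => hv0 (dotProduct_star_self_eq_zero.mp hc)
  have hc1 : dotProduct (star v) (A.mulVec v) = μ * dotProduct (star v) v := by
    rw [hv, dotProduct_smul, smul_eq_mul]
  have hc2 : star (dotProduct (star v) (A.mulVec v))
      = dotProduct (star v) (A.mulVec v) := by
    conv_lhs => rw [Matrix.star_dotProduct]
    rw [star_star, Matrix.star_mulVec, hA, ← Matrix.dotProduct_mulVec]
  rw [hc1, star_mul', hts] at hc2
  have hfin : star μ = μ := mul_right_cancel₀ ht0 hc2
  exact Complex.conj_eq_iff_im.mp hfin

lemma root_abs_le {m : Type*} [Fintype m] [DecidableEq m] [Nonempty m] (A : Matrix m m ℝ)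
    (h0 : ∀ i j, 0 ≤ A i j) (h1 : ∀ i, ∑ j, A i j = 1) {μ : ℂ}
    (h : ((A.map ⇑Complex.ofRealHom).charpoly).IsRoot μ) : ‖μ‖ ≤ 1 := by
  obtain ⟨v, hv0, hv⟩ := exists_eigenvector (A.map ⇑Complex.ofRealHom) h
  have hev : Module.End.HasEigenvalue (Matrix.toLin' (A.map ⇑Complex.ofRealHom)) μ := by
    apply Module.End.hasEigenvalue_of_hasEigenvector (x := v)
    exact ⟨Module.End.mem_eigenspace_iff.mpr (by rw [Matrix.toLin'_apply, hv]), hv0⟩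
  obtain ⟨k, hk⟩ := eigenvalue_mem_ball hev
  rw [Metric.mem_closedBall, dist_eq_norm] at hk
  have habs : ∀ j, ‖(A.map ⇑Complex.ofRealHom) k j‖ = A k j := by
    intro j
    rw [Matrix.map_apply]
    have he : (Complex.ofRealHom (A k j) : ℂ) = ((A k j : ℝ) : ℂ) := rfl
    rw [he, Complex.norm_real, Real.norm_eq_abs]
    exact abs_of_nonneg (h0 k j)
  calc ‖μ‖ = ‖μ‖ := rfl
    _ ≤ ‖μ - (A.map ⇑Complex.ofRealHom) k k‖ + ‖(A.map ⇑Complex.ofRealHom) k k‖ := by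
        have := norm_add_le (μ - (A.map ⇑Complex.ofRealHom) k k) ((A.map ⇑Complex.ofRealHom) k k)
        simpa using this
    _ ≤ (∑ j ∈ Finset.univ.erase k, ‖(A.map ⇑Complex.ofRealHom) k j‖)
        + ‖(A.map ⇑Complex.ofRealHom) k k‖ := by gcongr
    _ = (∑ j ∈ Finset.univ.erase k, A k j) + A k k := by
        rw [habs]
        congr 1
        exact Finset.sum_congr rfl (fun j _ => habs j)
    _ = ∑ j, A k j := by rw [add_comm, Finset.add_sum_erase _ _ (Finset.mem_univ k)]
    _ = 1 := h1 k

open Polynomial in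
lemma rm_symm {m : Type*} [Fintype m] [DecidableEq m] (A : Matrix m m ℂ)
    (hch : A.charpoly = ((1 : Matrix m m ℂ) - A).charpoly) (μ : ℂ) :
    A.charpoly.rootMultiplicity μ = A.charpoly.rootMultiplicity (1 - μ) := by
  set q := A.charpoly with hq
  have hq0 : q ≠ 0 := (Matrix.charpoly_monic A).ne_zero
  set N := Fintype.card m with hN
  have heval : ∀ t : ℂ, q.eval t = (-1) ^ N * q.eval (1 - t) := by
    intro t
    calc q.eval t = ((1 - A).charpoly).eval t := by rw [← hch]
      _ = (t • (1 : Matrix m m ℂ) - (1 - A)).det := eval_charpoly _ _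
      _ = (-((1 - t) • (1 : Matrix m m ℂ) - A)).det := by
          congr 1
          rw [sub_smul, one_smul]
          abel
      _ = (-1) ^ N * ((1 - t) • (1 : Matrix m m ℂ) - A).det := by rw [Matrix.det_neg]
      _ = (-1) ^ N * q.eval (1 - t) := by rw [eval_charpoly]
  have hcomp : q = C ((-1 : ℂ) ^ N) * (q.comp (1 - X)) := by
    apply Polynomial.funext
    intro t
    rw [Polynomial.eval_mul, Polynomial.eval_C, Polynomial.eval_comp]
    simp only [Polynomial.eval_sub, Polynomial.eval_one, Polynomial.eval_X]
    exact heval t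
  have hsub : ∀ a : ℂ, ∀ k : ℕ, (X - C a) ^ k ∣ q → (X - C (1 - a)) ^ k ∣ q := by
    intro a k hdvd
    have hφ : ((X - C a).comp (1 - X) : ℂ[X]) = -(X - C (1 - a)) := by
      rw [Polynomial.sub_comp, Polynomial.X_comp, Polynomial.C_comp]
      rw [map_sub, Polynomial.C_1]
      ring
    have hd2 : ((X - C a) ^ k).comp (1 - X) ∣ q.comp (1 - X) := by
      obtain ⟨c, hc⟩ := hdvd
      exact ⟨c.comp (1 - X), by rw [hc, Polynomial.mul_comp]⟩
    rw [Polynomial.pow_comp, hφ] at hd2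
    have hd3 : (X - C (1 - a)) ^ k ∣ q.comp (1 - X) := by
      refine dvd_trans ⟨(-1) ^ k, ?_⟩ hd2
      rw [neg_pow]
      ring
    have hd4 : q.comp (1 - X) ∣ C ((-1 : ℂ) ^ N) * q.comp (1 - X) := Dvd.intro_left _ rfl
    rw [← hcomp] at hd4
    exact hd3.trans hd4
  apply le_antisymm
  · rw [Polynomial.le_rootMultiplicity_iff hq0]
    exact hsub μ _ (Polynomial.pow_rootMultiplicity_dvd q μ)
  · rw [Polynomial.le_rootMultiplicity_iff hq0]
    have := hsub (1 - μ) _ (Polynomial.pow_rootMultiplicity_dvd q (1 - μ))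
    simpa using this

end KP

/-- the characteristic polynomial of `K` equals that of `I - K`;
consequently `lam` is an eigenvalue of `K` with a given algebraic multiplicity iff
`1 - lam` is an eigenvalue with the same algebraic multiplicity, and the spectrum of
`K` lies in `[0, 1]`. -/
theorem charpoly_K_eq_charpoly_one_sub_K (n : ℕ) (hn : 2 ≤ n) (p : Fin n → Fin n → ℝ)
    (hp : ∀ i j : Fin n, i ≠ j → p i j ∈ Set.Ioo (0 : ℝ) 1)
    (hps : ∀ i j : Fin n, i ≠ j → p i j + p j i = 1) :
    (Kmat n p).charpoly =
      ((1 : Matrix (Equiv.Perm (Fin n)) (Equiv.Perm (Fin n)) ℝ) - Kmat n p).charpoly ∧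
    (∀ μ : ℂ, Polynomial.rootMultiplicity μ (((Kmat n p).map Complex.ofReal).charpoly) =
      Polynomial.rootMultiplicity (1 - μ) (((Kmat n p).map Complex.ofReal).charpoly)) ∧
    (∀ μ : ℂ, (((Kmat n p).map Complex.ofReal).charpoly).IsRoot μ →
      μ.im = 0 ∧ 0 ≤ μ.re ∧ μ.re ≤ 1) := by
  classical
  have hpart1 := KP.charpoly_one_sub hn p hps
  have hKcdef : (Kmat n p).map Complex.ofReal = (Kmat n p).map ⇑Complex.ofRealHom := rfl
  have hmap1 : ((1 : Matrix (Equiv.Perm (Fin n)) (Equiv.Perm (Fin n)) ℝ) - Kmat n p).map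
        ⇑Complex.ofRealHom
      = 1 - (Kmat n p).map ⇑Complex.ofRealHom := by
    ext x y
    rw [Matrix.map_apply, Matrix.sub_apply, map_sub, Matrix.sub_apply, Matrix.map_apply]
    congr 1
    by_cases hxy : x = y
    · simp [Matrix.one_apply, hxy]
    · simp [Matrix.one_apply, hxy]
  have hch : ((Kmat n p).map ⇑Complex.ofRealHom).charpoly
      = ((1 : Matrix (Equiv.Perm (Fin n)) (Equiv.Perm (Fin n)) ℂ)
          - (Kmat n p).map ⇑Complex.ofRealHom).charpoly := by
    rw [Matrix.charpoly_map, hpart1, ← Matrix.charpoly_map, hmap1]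
  have hrm := fun μ => KP.rm_symm ((Kmat n p).map ⇑Complex.ofRealHom) hch μ
  refine ⟨hpart1, fun μ => by rw [hKcdef]; exact hrm μ, ?_⟩
  intro μ hroot
  rw [hKcdef] at hroot
  set q := ((Kmat n p).map ⇑Complex.ofRealHom).charpoly with hqdef
  have hq0 : q ≠ 0 := (Matrix.charpoly_monic _).ne_zero
  set d2 : Equiv.Perm (Fin n) → ℝ := fun x => Real.sqrt (piUn n p x) with hd2def
  have hd2 : ∀ x, 0 < d2 x := fun x => Real.sqrt_pos.mpr (KP.piUn_pos p hp x)
  have hd2sq : ∀ x, d2 x * d2 x = piUn n p x := fun x => Real.mul_self_sqrt (KP.piUn_pos p hp x).le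
  have hPQ : Matrix.diagonal d2 * Matrix.diagonal (fun x => (d2 x)⁻¹) = 1 := by
    rw [Matrix.diagonal_mul_diagonal]
    have h : (fun x => d2 x * (d2 x)⁻¹) = fun _ => (1 : ℝ) :=
      funext (fun x => mul_inv_cancel₀ (hd2 x).ne')
    rw [h, Matrix.diagonal_one]
  set S := Matrix.diagonal d2 * Kmat n p * Matrix.diagonal (fun x => (d2 x)⁻¹) with hSdef
  have hSch : S.charpoly = (Kmat n p).charpoly := KP.charpoly_conj _ _ _ hPQ
  have hssym : ∀ x y, S x y = S y x := by
    intro x y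
    rw [hSdef]
    simp only [Matrix.mul_diagonal, Matrix.diagonal_mul]
    have hdb := KP.detailed_balance p x y
    rw [← hd2sq, ← hd2sq] at hdb
    have hx0 := (hd2 x).ne'
    have hy0 := (hd2 y).ne'
    field_simp
    linear_combination hdb
  have hherm : (Matrix.conjTranspose (S.map ⇑Complex.ofRealHom) = S.map ⇑Complex.ofRealHom) := by
    ext x y
    rw [Matrix.conjTranspose_apply, Matrix.map_apply, Matrix.map_apply]
    have he : (Complex.ofRealHom (S y x) : ℂ) = ((S y x : ℝ) : ℂ) := rfl
    rw [he, Complex.star_def, Complex.conj_ofReal, hssym y x]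
    rfl
  have hScch : (S.map ⇑Complex.ofRealHom).charpoly = q := by
    rw [Matrix.charpoly_map, hSch, hqdef, ← Matrix.charpoly_map]
  have him : μ.im = 0 := by
    refine KP.herm_root_real _ hherm (μ := μ) ?_
    rw [hScch]
    exact hroot
  haveI : Nonempty (Equiv.Perm (Fin n)) := ⟨1⟩
  have habs1 : ‖μ‖ ≤ 1 :=
    KP.root_abs_le (Kmat n p) (KP.kmat_nonneg hn p hp) (KP.kmat_rowsum p) hroot
  have hroot2 : q.IsRoot (1 - μ) := by
    have h1 : 0 < q.rootMultiplicity μ := (Polynomial.rootMultiplicity_pos hq0).mpr hroot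
    rw [hrm μ] at h1
    exact (Polynomial.rootMultiplicity_pos hq0).mp h1
  have habs2 : ‖(1 - μ)‖ ≤ 1 :=
    KP.root_abs_le (Kmat n p) (KP.kmat_nonneg hn p hp) (KP.kmat_rowsum p) hroot2
  have hμre : ((μ.re : ℝ) : ℂ) = μ := Complex.ext rfl (by simp [him])
  have habs1' : |μ.re| ≤ 1 := by
    calc |μ.re| = ‖((μ.re : ℝ) : ℂ)‖ := by rw [Complex.norm_real, Real.norm_eq_abs]
      _ = ‖μ‖ := by rw [hμre]
      _ ≤ 1 := habs1
  have habs2' : |1 - μ.re| ≤ 1 := by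
    calc |1 - μ.re| = ‖(((1 - μ.re : ℝ)) : ℂ)‖ := by rw [Complex.norm_real, Real.norm_eq_abs]
      _ = ‖(1 - μ)‖ := by rw [Complex.ofReal_sub, Complex.ofReal_one, hμre]
      _ ≤ 1 := habs2
  rw [abs_le] at habs1' habs2'
  exact ⟨him, by linarith [habs2'.2], habs1'.2⟩
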